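/- Let μ be a probability measure on M and let r, s ≥ 0 be reals. Then the convolution exponentials satisfy e^{r(μ⋆−1)} ⋆ e^{s(μ⋆−1)} = e^{(r+s)(μ⋆−1)}. -/

import Mathlib

open MeasureTheory
open scoped ENNReal

/-- n-fold convolution power, with `μ^{*0} = δ_1`. -/
noncomputable def mconvPow {M : Type*} [Monoid M] [MeasurableSpace M]
    (μ : Measure M) : ℕ → Measure M
  | 0 => Measure.dirac 1
  | n + 1 => Measure.mconv (mconvPow μ n) μ

/-- The convolution exponential `e^{r(μ⋆−1)} = e^{−r} ∑ (r^n/n!) • μ^{*n}`. -/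
noncomputable def convExp {M : Type*} [Monoid M] [MeasurableSpace M]
    (μ : Measure M) (r : ℝ) : Measure M :=
  ENNReal.ofReal (Real.exp (-r)) •
    Measure.sum fun n => ENNReal.ofReal (r ^ n / n.factorial) • mconvPow μ n

section Aux

open Measure

variable {M : Type*} [Monoid M] [MeasurableSpace M]

lemma smul_prod' {α β : Type*} [MeasurableSpace α] [MeasurableSpace β]
    (c : ℝ≥0∞) (μ : Measure α) (ν : Measure β) [SFinite ν] :
    (c • μ).prod ν = c • μ.prod ν := by
  ext s hs
  rw [prod_apply hs, Measure.smul_apply, prod_apply hs, lintegral_smul_measure]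

lemma smul_mconv' [MeasurableMul₂ M] (c : ℝ≥0∞) (μ ν : Measure M) [SFinite ν] :
    (c • μ).mconv ν = c • μ.mconv ν := by
  unfold mconv
  rw [smul_prod', Measure.map_smul]

lemma sum_mconv' [MeasurableMul₂ M] (m : ℕ → Measure M) (ν : Measure M) [SFinite ν] :
    (Measure.sum m).mconv ν = Measure.sum (fun n => (m n).mconv ν) := by
  unfold mconv
  rw [prod_sum_left, Measure.map_sum (by fun_prop : Measurable fun x : M × M => x.1 * x.2).aemeasurable]

lemma mconv_assoc' [MeasurableMul₂ M] (μ ν ρ : Measure M) [SFinite μ] [SFinite ν] [SFinite ρ] :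
    (μ.mconv ν).mconv ρ = μ.mconv (ν.mconv ρ) := by
  have hm : Measurable fun x : M × M => x.1 * x.2 := measurable_mul
  unfold Measure.mconv
  have h1 : (Measure.map (fun x : M × M => x.1 * x.2) (μ.prod ν)).prod ρ
      = Measure.map (Prod.map (fun x : M × M => x.1 * x.2) id) ((μ.prod ν).prod ρ) := by
    conv_lhs => rw [← Measure.map_id (μ := ρ)]
    exact Measure.map_prod_map _ _ hm measurable_id
  have h2 : μ.prod (Measure.map (fun x : M × M => x.1 * x.2) (ν.prod ρ))
      = Measure.map (Prod.map id (fun x : M × M => x.1 * x.2)) (μ.prod (ν.prod ρ)) := by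
    conv_lhs => rw [← Measure.map_id (μ := μ)]
    exact Measure.map_prod_map _ _ measurable_id hm
  rw [h1, h2, ← Measure.prodAssoc_prod (μ := μ) (ν := ν) (τ := ρ),
    Measure.map_map hm (by fun_prop), Measure.map_map (by fun_prop) (by fun_prop),
    Measure.map_map (by fun_prop) (by fun_prop)]
  congr 1
  ext x
  exact mul_assoc _ _ _

instance mconvPow_prob [MeasurableMul₂ M] (μ : Measure M) [IsProbabilityMeasure μ] (n : ℕ) :
    IsProbabilityMeasure (mconvPow μ n) := by
  induction n with
  | zero => exact Measure.dirac.isProbabilityMeasure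
  | succ n ih => exact Measure.probabilitymeasure_of_probabilitymeasures_mconv _ _

lemma mconvPow_add {M : Type*} [CommMonoid M] [MeasurableSpace M] [MeasurableMul₂ M]
    (μ : Measure M) [IsProbabilityMeasure μ] (m n : ℕ) :
    mconvPow μ (m + n) = (mconvPow μ m).mconv (mconvPow μ n) := by
  induction n with
  | zero => simp [mconvPow]
  | succ n ih =>
    show mconvPow μ (m + n + 1) = _
    rw [show mconvPow μ (m + n + 1) = (mconvPow μ (m + n)).mconv μ from rfl, ih,
      mconv_assoc']
    rfl

lemma realbin (r s : ℝ) (k : ℕ) :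
    ∑ p ∈ Finset.HasAntidiagonal.antidiagonal k,
      r ^ p.1 / p.1.factorial * (s ^ p.2 / p.2.factorial) = (r + s) ^ k / k.factorial := by
  rw [Finset.Nat.sum_antidiagonal_eq_sum_range_succ_mk, add_pow, Finset.sum_div]
  refine Finset.sum_congr rfl fun i hi => ?_
  have hik : i ≤ k := Nat.lt_succ_iff.mp (Finset.mem_range.mp hi)
  have h := Nat.choose_mul_factorial_mul_factorial hik
  have hk : (k.factorial : ℝ) = (k.choose i) * i.factorial * (k - i).factorial := by
    exact_mod_cast h.symm
  have h1 : (i.factorial : ℝ) ≠ 0 := Nat.cast_ne_zero.mpr i.factorial_ne_zero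
  have h2 : ((k - i).factorial : ℝ) ≠ 0 := Nat.cast_ne_zero.mpr (k - i).factorial_ne_zero
  have h3 : (k.factorial : ℝ) ≠ 0 := Nat.cast_ne_zero.mpr k.factorial_ne_zero
  field_simp
  rw [hk]
  ring

lemma key (r s : ℝ) (hr : 0 ≤ r) (hs : 0 ≤ s) (f : ℕ → ℝ≥0∞) :
    ∑' n, ∑' m, ENNReal.ofReal (r ^ n / n.factorial) *
        ENNReal.ofReal (s ^ m / m.factorial) * f (n + m)
      = ∑' k, ENNReal.ofReal ((r + s) ^ k / k.factorial) * f k := by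
  rw [← ENNReal.tsum_prod,
    ← Finset.HasAntidiagonal.sigmaAntidiagonalEquivProd.tsum_eq
      (fun p : ℕ × ℕ => ENNReal.ofReal (r ^ p.1 / p.1.factorial) *
        ENNReal.ofReal (s ^ p.2 / p.2.factorial) * f (p.1 + p.2)),
    ENNReal.tsum_sigma']
  refine tsum_congr fun k => ?_
  simp only [Finset.HasAntidiagonal.sigmaAntidiagonalEquivProd_apply]
  rw [tsum_fintype, Finset.sum_coe_sort (Finset.HasAntidiagonal.antidiagonal k)
    (fun p : ℕ × ℕ => ENNReal.ofReal (r ^ p.1 / p.1.factorial) *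
      ENNReal.ofReal (s ^ p.2 / p.2.factorial) * f (p.1 + p.2))]
  have : ∀ p ∈ Finset.HasAntidiagonal.antidiagonal k,
      ENNReal.ofReal (r ^ p.1 / p.1.factorial) * ENNReal.ofReal (s ^ p.2 / p.2.factorial)
        * f (p.1 + p.2)
      = ENNReal.ofReal (r ^ p.1 / p.1.factorial * (s ^ p.2 / p.2.factorial)) * f k := by
    intro p hp
    rw [Finset.HasAntidiagonal.mem_antidiagonal] at hp
    rw [hp, ENNReal.ofReal_mul (div_nonneg (pow_nonneg hr _) (Nat.cast_nonneg _))]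
  rw [Finset.sum_congr rfl this, ← Finset.sum_mul, ← ENNReal.ofReal_sum_of_nonneg
    (fun p _ => mul_nonneg (div_nonneg (pow_nonneg hr _) (Nat.cast_nonneg _))
      (div_nonneg (pow_nonneg hs _) (Nat.cast_nonneg _))), realbin]

end Aux

theorem stmt10 {M : Type*} [CommMonoid M] [MeasurableSpace M] [MeasurableMul₂ M]
    (μ : Measure M) [IsProbabilityMeasure μ]
    (r s : ℝ) (hr : 0 ≤ r) (hs : 0 ≤ s) :
    Measure.mconv (convExp μ r) (convExp μ s) = convExp μ (r + s) := by
  unfold convExp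
  set S : Measure M := Measure.sum fun n => ENNReal.ofReal (r ^ n / n.factorial) • mconvPow μ n
  set T : Measure M := Measure.sum fun n => ENNReal.ofReal (s ^ n / n.factorial) • mconvPow μ n
  have hST : S.mconv T = Measure.sum fun k =>
      ENNReal.ofReal ((r + s) ^ k / k.factorial) • mconvPow μ k := by
    rw [show S.mconv T = Measure.sum (fun n => (ENNReal.ofReal (r ^ n / n.factorial)
        • mconvPow μ n).mconv T) from sum_mconv' _ _]
    ext A hA
    rw [Measure.sum_apply _ hA, Measure.sum_apply _ hA]
    have : ∀ n, ((ENNReal.ofReal (r ^ n / n.factorial) • mconvPow μ n).mconv T) A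
        = ∑' m, ENNReal.ofReal (r ^ n / n.factorial) *
            ENNReal.ofReal (s ^ m / m.factorial) * (mconvPow μ (n + m)) A := by
      intro n
      rw [smul_mconv', Measure.mconv_comm, sum_mconv']
      simp only [Measure.smul_apply, Measure.sum_apply _ hA, smul_eq_mul]
      have h2 : ∀ m : ℕ, ((ENNReal.ofReal (s ^ m / m.factorial) • mconvPow μ m).mconv
            (mconvPow μ n)) A
          = ENNReal.ofReal (s ^ m / m.factorial) * (mconvPow μ (n + m)) A := by
        intro m
        rw [smul_mconv', Measure.mconv_comm, ← mconvPow_add, Measure.smul_apply, smul_eq_mul]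
      simp_rw [h2, ← ENNReal.tsum_mul_left]
      exact tsum_congr fun m => (mul_assoc _ _ _).symm
    simp_rw [this]
    simpa using key r s hr hs (fun k => (mconvPow μ k) A)
  rw [smul_mconv', Measure.mconv_comm, smul_mconv', Measure.mconv_comm, hST,
    smul_smul, ← ENNReal.ofReal_mul (Real.exp_nonneg _), ← Real.exp_add,
    show -r + -s = -(r + s) by ring]
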